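/- In Q[[x,y]], with L(x,y) = (1 − (2xy/(1−x))²)^(1/2), the series (1−x)^(−2)·( (x+1)/L(x,y) − (1/2)·((1−x)/(xy))²·(1 − L(x,y)) ) equals ∑_{n≥0} ∑_{k≥0} binomial(n, k+1)·binomial(n−k, k)·x^n·y^(2k). -/

import Mathlib

open Finset MvPowerSeries

namespace Stmt18

noncomputable def s (n m : ℕ) : Fin 2 →₀ ℕ := Finsupp.single 0 n + Finsupp.single 1 m

@[simp] lemma s_apply0 (n m : ℕ) : s n m 0 = n := by
  simp [s, Finsupp.single_apply]

@[simp] lemma s_apply1 (n m : ℕ) : s n m 1 = m := by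
  simp [s, Finsupp.single_apply]

lemma d_eq (d : Fin 2 →₀ ℕ) : d = s (d 0) (d 1) := by
  ext i; fin_cases i <;> simp [s, Finsupp.single_apply]

lemma s_add (a b c e : ℕ) : s a b + s c e = s (a+c) (b+e) := by
  ext i; fin_cases i <;> simp

lemma s_le {a b n m : ℕ} : s a b ≤ s n m ↔ a ≤ n ∧ b ≤ m := by
  constructor
  · intro h
    exact ⟨by simpa using Finsupp.le_def.mp h 0, by simpa using Finsupp.le_def.mp h 1⟩
  · rintro ⟨h1, h2⟩
    refine Finsupp.le_def.mpr ?_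
    intro i; fin_cases i <;> simpa

lemma s_sub (a b n m : ℕ) : s n m - s a b = s (n-a) (m-b) := by
  ext i; fin_cases i <;> simp [Finsupp.tsub_apply]

lemma s_inj {a b n m : ℕ} : s a b = s n m ↔ a = n ∧ b = m := by
  constructor
  · intro h
    exact ⟨by rw [← s_apply0 a b, h, s_apply0], by rw [← s_apply1 a b, h, s_apply1]⟩
  · rintro ⟨rfl, rfl⟩; rfl

noncomputable def mk2 (f : ℕ → ℕ → ℚ) : MvPowerSeries (Fin 2) ℚ := fun d => f (d 0) (d 1)

@[simp] lemma coeff_mk2 (f : ℕ → ℕ → ℚ) (d : Fin 2 →₀ ℕ) :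
    MvPowerSeries.coeff d (mk2 f) = f (d 0) (d 1) := rfl

lemma coeff_mul2 (f g : MvPowerSeries (Fin 2) ℚ) (n m : ℕ) :
    MvPowerSeries.coeff (s n m) (f * g) =
      ∑ i ∈ range (n+1), ∑ p ∈ range (m+1),
        MvPowerSeries.coeff (s i p) f * MvPowerSeries.coeff (s (n-i) (m-p)) g := by
  rw [MvPowerSeries.coeff_mul]
  rw [← Finset.sum_product']
  refine Finset.sum_nbij' (fun p => (p.1 0, p.1 1))
    (fun q => (s q.1 q.2, s (n - q.1) (m - q.2))) ?hi ?hj ?hleft ?hright ?hh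
  case hi =>
    rintro ⟨p1, p2⟩ hp
    rw [Finset.HasAntidiagonal.mem_antidiagonal] at hp
    have h0 : p1 0 + p2 0 = n := by rw [← s_apply0 n m, ← hp]; simp [Finsupp.add_apply]
    have h1 : p1 1 + p2 1 = m := by rw [← s_apply1 n m, ← hp]; simp [Finsupp.add_apply]
    simp only [Finset.mem_product, Finset.mem_range]
    omega
  case hj =>
    rintro ⟨i, p⟩ hq
    simp only [Finset.mem_product, Finset.mem_range] at hq
    rw [Finset.HasAntidiagonal.mem_antidiagonal, s_add, s_inj]
    omega
  case hleft =>
    rintro ⟨p1, p2⟩ hp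
    rw [Finset.HasAntidiagonal.mem_antidiagonal] at hp
    have h0 : p1 0 + p2 0 = n := by rw [← s_apply0 n m, ← hp]; simp [Finsupp.add_apply]
    have h1 : p1 1 + p2 1 = m := by rw [← s_apply1 n m, ← hp]; simp [Finsupp.add_apply]
    have e1 : p1 = s (p1 0) (p1 1) := d_eq p1
    have e2 : p2 = s (p2 0) (p2 1) := d_eq p2
    simp only [Prod.mk.injEq]
    refine ⟨e1.symm, ?_⟩
    rw [e2, s_inj]
    omega
  case hright =>
    rintro ⟨i, p⟩ _
    simp only [Prod.mk.injEq, s_apply0, s_apply1]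
  case hh =>
    rintro ⟨p1, p2⟩ hp
    rw [Finset.HasAntidiagonal.mem_antidiagonal] at hp
    have h0 : p1 0 + p2 0 = n := by rw [← s_apply0 n m, ← hp]; simp [Finsupp.add_apply]
    have h1 : p1 1 + p2 1 = m := by rw [← s_apply1 n m, ← hp]; simp [Finsupp.add_apply]
    have e1 : p1 = s (p1 0) (p1 1) := d_eq p1
    have e2 : p2 = s (p2 0) (p2 1) := d_eq p2
    have e3 : s (p2 0) (p2 1) = s (n - p1 0) (m - p1 1) := by
      rw [s_inj]; omega
    calc (coeff p1) f * (coeff p2) g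
        = (coeff (s (p1 0) (p1 1))) f * (coeff (s (p2 0) (p2 1))) g := by rw [← e1, ← e2]
      _ = _ := by rw [e3]

/-- hockey stick in range form -/
lemma hockey (n b : ℕ) : ∑ i ∈ range (n+1), i.choose b = (n+1).choose (b+1) := by
  rcases le_or_gt b n with h | h
  · rw [← Nat.sum_Icc_choose n b]
    symm
    apply Finset.sum_subset
    · intro x hx
      rw [Finset.mem_Icc] at hx
      rw [Finset.mem_range]
      omega
    · intro x hx hx2
      rw [Finset.mem_range] at hx
      rw [Finset.mem_Icc] at hx2
      exact Nat.choose_eq_zero_of_lt (by omega)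
  · rw [Nat.choose_eq_zero_of_lt (by omega)]
    apply Finset.sum_eq_zero
    intro x hx
    rw [Finset.mem_range] at hx
    exact Nat.choose_eq_zero_of_lt (by omega)

/-- dual Vandermonde -/
lemma V0 (n a b : ℕ) :
    ∑ i ∈ range (n+1), (i.choose a) * ((n-i).choose b) = (n+1).choose (a+b+1) := by
  induction n generalizing a with
  | zero =>
    rw [Finset.sum_range_one]
    rcases Nat.eq_zero_or_pos a with rfl | ha
    · rcases Nat.eq_zero_or_pos b with rfl | hb
      · decide
      · rw [Nat.choose_eq_zero_of_lt hb, Nat.choose_eq_zero_of_lt (by omega : (1:ℕ) < 0+b+1)]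
        ring
    · rw [Nat.choose_eq_zero_of_lt ha, Nat.choose_eq_zero_of_lt (by omega : (1:ℕ) < a+b+1)]
      ring
  | succ n ih =>
    rcases Nat.eq_zero_or_pos a with rfl | ha
    · simp only [Nat.choose_zero_right, one_mul]
      have h1 : ∀ x ∈ range (n+2), (n+1-x).choose b = ((n+2)-1-x).choose b := by
        intro x _
        have h2 : n+1-x = (n+2)-1-x := by omega
        rw [h2]
      rw [Finset.sum_congr rfl h1, Finset.sum_range_reflect (fun j => j.choose b) (n+2), hockey]
      congr 1
      omega
    · obtain ⟨a, rfl⟩ := Nat.exists_eq_add_of_lt ha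
      have ea : (0:ℕ)+a+1 = a+1 := by omega
      rw [ea, Finset.sum_range_succ']
      have h1 : ∀ i ∈ range (n+1),
          (i+1).choose (a+1) * ((n+1-(i+1)).choose b) =
          i.choose a * ((n-i).choose b) + i.choose (a+1) * ((n-i).choose b) := by
        intro i hi
        rw [Finset.mem_range] at hi
        have h2 : n+1-(i+1) = n-i := by omega
        rw [h2, Nat.choose_succ_succ, add_mul]
      rw [Finset.sum_congr rfl h1, Finset.sum_add_distrib, ih a, ih (a+1)]
      rw [Nat.choose_zero_succ, zero_mul, add_zero]
      have e2 : a+1+b+1 = (a+b+1)+1 := by omega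
      rw [e2, ← Nat.choose_succ_succ' (n+1) (a+b+1)]

lemma V0b (n a b : ℕ) (hb : 1 ≤ b) :
    ∑ i ∈ range (n+1), (i.choose a) * (((n-i)+1).choose b) = (n+2).choose (a+b+1) := by
  have h := V0 (n+1) a b
  rw [Finset.sum_range_succ] at h
  rw [Nat.sub_self, Nat.choose_eq_zero_of_lt hb, mul_zero, add_zero] at h
  rw [← h]
  apply Finset.sum_congr rfl
  intro i hi
  rw [Finset.mem_range] at hi
  have e : n+1-i = (n-i)+1 := by omega
  rw [e]

lemma V1 (n a b : ℕ) (ha : 1 ≤ a) (hb : 1 ≤ b) :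
    ∑ i ∈ range (n+1), ((i-1).choose a) * ((n-i-1).choose b) = (n-1).choose (a+b+1) := by
  match n with
  | 0 =>
    rw [Finset.sum_range_one, Nat.choose_eq_zero_of_lt ha, zero_mul]
    rw [Nat.choose_eq_zero_of_lt (by omega : (0:ℕ)-1 < a+b+1)]
  | 1 =>
    rw [Finset.sum_range_succ, Finset.sum_range_one]
    rw [Nat.choose_eq_zero_of_lt (ha : (0:ℕ) < a)]
    have h1 : (1:ℕ)-1-1 = 0 := by omega
    rw [h1, Nat.choose_eq_zero_of_lt hb]
    rw [Nat.choose_eq_zero_of_lt (by omega : (1:ℕ)-1 < a+b+1)]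
  | (n+2) =>
    rw [Finset.sum_range_succ', Finset.sum_range_succ]
    rw [Nat.choose_eq_zero_of_lt (ha : (0:ℕ)-1 < a), zero_mul, add_zero]
    have h2 : (n+2)-(n+1+1)-1 = 0 := by omega
    rw [h2, Nat.choose_eq_zero_of_lt hb, mul_zero, add_zero]
    have h3 : ∀ i ∈ range (n+1), ((i+1-1).choose a) * ((n+2-(i+1)-1).choose b)
        = (i.choose a) * ((n-i).choose b) := by
      intro i hi
      rw [Finset.mem_range] at hi
      have ea : i+1-1 = i := by omega
      have eb : n+2-(i+1)-1 = n-i := by omega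
      rw [ea, eb]
    rw [Finset.sum_congr rfl h3, V0]
    congr 1

lemma V2 (n a b : ℕ) (ha : 1 ≤ a) (hb : 1 ≤ b) :
    ∑ i ∈ range (n+1), ((i-1).choose a) * ((n-i+1).choose b) = (n+1).choose (a+b+1) := by
  match n with
  | 0 =>
    rw [Finset.sum_range_one, Nat.choose_eq_zero_of_lt ha, zero_mul]
    rw [Nat.choose_eq_zero_of_lt (by omega : (1:ℕ) < a+b+1)]
  | (n+1) =>
    rw [Finset.sum_range_succ']
    rw [Nat.choose_eq_zero_of_lt (ha : (0:ℕ)-1 < a), zero_mul, add_zero]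
    have h3 : ∀ i ∈ range (n+1), ((i+1-1).choose a) * ((n+1-(i+1)+1).choose b)
        = (i.choose a) * (((n-i)+1).choose b) := by
      intro i hi
      rw [Finset.mem_range] at hi
      have ea : i+1-1 = i := by omega
      have eb : n+1-(i+1)+1 = (n-i)+1 := by omega
      rw [ea, eb]
    rw [Finset.sum_congr rfl h3, V0b n a b hb]

lemma cast_catalan_c (i : ℕ) : ((i:ℚ)+1) * (catalan i : ℚ) = (i.centralBinom : ℚ) := by
  exact_mod_cast congrArg (Nat.cast : ℕ → ℚ) (succ_mul_catalan_eq_centralBinom i)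

/-- the key central-binomial/Catalan convolution -/
lemma CH (k : ℕ) : ((k+1).centralBinom : ℚ) =
    2 * ∑ j ∈ range (k+1), (catalan j : ℚ) * ((k-j).centralBinom : ℚ) := by
  have h1 : ∀ j ∈ range (k+1), (catalan j : ℚ) * ((k-j).centralBinom : ℚ)
      = ((k:ℚ)-j+1) * ((catalan j : ℚ) * (catalan (k-j) : ℚ)) := by
    intro j hj
    rw [Finset.mem_range] at hj
    rw [← cast_catalan_c (k-j)]
    have : (((k-j : ℕ) : ℚ)) = (k:ℚ)-j := by
      rw [Nat.cast_sub (by omega)]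
    rw [this]
    ring
  rw [Finset.sum_congr rfl h1]
  have h2 : ∑ j ∈ range (k+1), ((k:ℚ)-j+1) * ((catalan j : ℚ) * (catalan (k-j) : ℚ))
      = ∑ j ∈ range (k+1), ((j:ℚ)+1) * ((catalan j : ℚ) * (catalan (k-j) : ℚ)) := by
    rw [← Finset.sum_range_reflect (fun j => ((j:ℚ)+1) * ((catalan j : ℚ) * (catalan (k-j) : ℚ))) (k+1)]
    apply Finset.sum_congr rfl
    intro j hj
    rw [Finset.mem_range] at hj
    have e1 : k+1-1-j = k-j := by omega
    have e2 : k-(k-j) = j := by omega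
    rw [e1, e2]
    have e3 : ((k-j : ℕ) : ℚ) = (k:ℚ)-j := by rw [Nat.cast_sub (by omega)]
    rw [e3]
    ring
  have h3 : (2:ℚ) * ∑ j ∈ range (k+1), ((k:ℚ)-j+1) * ((catalan j : ℚ) * (catalan (k-j) : ℚ))
      = ∑ j ∈ range (k+1), ((k:ℚ)+2) * ((catalan j : ℚ) * (catalan (k-j) : ℚ)) := by
    rw [two_mul]
    nth_rewrite 2 [h2]
    rw [← Finset.sum_add_distrib]
    apply Finset.sum_congr rfl
    intro j hj
    ring
  rw [h3, ← Finset.mul_sum]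
  have h4 : ∑ j ∈ range (k+1), (catalan j : ℚ) * (catalan (k-j) : ℚ)
      = (catalan (k+1) : ℚ) := by
    rw [catalan_succ' k]
    rw [Nat.sum_antidiagonal_eq_sum_range_succ (fun x y => catalan x * catalan y) k]
    push_cast
    rfl
  rw [h4, ← cast_catalan_c (k+1)]
  push_cast
  ring

/-- the key binomial identity -/
lemma II (n k : ℕ) : (n.choose (k+1) : ℚ) * (((n-k).choose k : ℕ) : ℚ) =
    ((2*k).choose k : ℚ) * (n.choose (2*k+1) : ℚ)
      + ((2*k).choose (k+1) : ℚ) * ((n+1).choose (2*k+1) : ℚ) := by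
  rcases Nat.eq_zero_or_pos k with rfl | hk
  · simp
  rcases lt_or_ge n (2*k) with h | h
  · -- everything vanishes
    have e1 : ((n-k).choose k : ℕ) = 0 := by
      rcases lt_or_ge n k with h2 | h2
      · have : n-k = 0 := by omega
        rw [this]; exact Nat.choose_eq_zero_of_lt hk
      · exact Nat.choose_eq_zero_of_lt (by omega)
    have e2 : n.choose (2*k+1) = 0 := Nat.choose_eq_zero_of_lt (by omega)
    have e3 : (n+1).choose (2*k+1) = 0 := Nat.choose_eq_zero_of_lt (by omega)
    rw [e1, e2, e3]
    push_cast
    ring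
  rcases eq_or_lt_of_le h with rfl | h
  · -- n = 2k
    have e1 : 2*k-k = k := by omega
    have e2 : (2*k).choose (2*k+1) = 0 := Nat.choose_eq_zero_of_lt (by omega)
    have e3 : (2*k+1).choose (2*k+1) = 1 := Nat.choose_self _
    rw [e1, e2, e3, Nat.choose_self]
    push_cast
    ring
  · -- n ≥ 2k+1
    have hn : 2*k+1 ≤ n := h
    have h1 : (n.choose (k+1) : ℚ) * ((k:ℚ)+1) = (n.choose k : ℚ) * ((n:ℚ)-k) := by
      have := Nat.choose_succ_right_eq n k
      have hc : ((n.choose (k+1) * (k+1) : ℕ) : ℚ) = ((n.choose k * (n-k) : ℕ) : ℚ) := by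
        exact_mod_cast congrArg (Nat.cast : ℕ → ℚ) this
      push_cast [Nat.cast_sub (by omega : k ≤ n)] at hc
      linarith
    have h2 : (n.choose (2*k+1) : ℚ) * (2*(k:ℚ)+1) = (n.choose (2*k) : ℚ) * ((n:ℚ)-2*k) := by
      have := Nat.choose_succ_right_eq n (2*k)
      have hc : ((n.choose (2*k+1) * (2*k+1) : ℕ) : ℚ) = ((n.choose (2*k) * (n-2*k) : ℕ) : ℚ) := by
        exact_mod_cast congrArg (Nat.cast : ℕ → ℚ) this
      push_cast [Nat.cast_sub (by omega : 2*k ≤ n)] at hc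
      linarith
    have h3 : ((n+1).choose (2*k+1) : ℚ) = (n.choose (2*k) : ℚ) + (n.choose (2*k+1) : ℚ) := by
      rw [Nat.choose_succ_succ' n (2*k)]
      push_cast
      ring
    have h4 : ((2*k).choose (k+1) : ℚ) * ((k:ℚ)+1) = ((2*k).choose k : ℚ) * (k:ℚ) := by
      have := Nat.choose_succ_right_eq (2*k) k
      have hc : (((2*k).choose (k+1) * (k+1) : ℕ) : ℚ) = (((2*k).choose k * (2*k-k) : ℕ) : ℚ) := by
        exact_mod_cast congrArg (Nat.cast : ℕ → ℚ) this
      have e : 2*k-k = k := by omega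
      rw [e] at hc
      push_cast at hc
      linarith
    have h5 : (n.choose k : ℚ) * (((n-k).choose k : ℕ) : ℚ)
        = (n.choose (2*k) : ℚ) * ((2*k).choose k : ℚ) := by
      have := Nat.choose_mul (n := n) (k := 2*k) (s := k) (by omega : k ≤ 2*k)
      have e : 2*k-k = k := by omega
      rw [e] at this
      exact_mod_cast congrArg (Nat.cast : ℕ → ℚ) this.symm
    have hne : ((k:ℚ)+1) * (2*(k:ℚ)+1) ≠ 0 := by positivity
    refine mul_right_cancel₀ hne ?_
    linear_combination ((((n-k).choose k : ℕ):ℚ)*(2*(k:ℚ)+1))*h1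
      + (((n:ℚ)-(k:ℚ))*(2*(k:ℚ)+1))*h5
      - ((((2*k).choose k : ℕ):ℚ)*((k:ℚ)+1) + (k:ℚ)*(((2*k).choose k : ℕ):ℚ))*h2
      - ((((n+1).choose (2*k+1) : ℕ):ℚ)*(2*(k:ℚ)+1))*h4
      - ((((2*k).choose k : ℕ):ℚ)*(k:ℚ)*(2*(k:ℚ)+1))*h3

/-- collapse a sum over a range to even indices -/
lemma sum_even (t : ℕ → ℚ) (ht : ∀ p, p % 2 = 1 → t p = 0) (k : ℕ) :
    ∑ p ∈ range (2*k+1), t p = ∑ j ∈ range (k+1), t (2*j) := by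
  induction k with
  | zero => rw [Finset.sum_range_one, Finset.sum_range_one]
  | succ k ih =>
    have e : 2*(k+1)+1 = (2*k+1)+1+1 := by omega
    rw [e, Finset.sum_range_succ, Finset.sum_range_succ, ih]
    rw [ht (2*k+1) (by omega)]
    conv_rhs => rw [Finset.sum_range_succ]
    have e2 : 2*k+1+1 = 2*(k+1) := by omega
    rw [e2]
    ring

noncomputable section

def μf (n m : ℕ) : ℚ :=
  if m = 0 then (if n = 0 then 1 else 0)
  else if m % 2 = 0 then (-2) * (catalan (m/2 - 1) : ℚ) * (((n-1).choose (m-1) : ℕ) : ℚ)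
  else 0

def ηf (n m : ℕ) : ℚ :=
  if m % 2 = 0 then ((m/2).centralBinom : ℚ) * (((n+1).choose (m+1) : ℕ) : ℚ) else 0

def γf (n m : ℕ) : ℚ :=
  if m % 2 = 0 then (catalan (m/2) : ℚ) * (((n+1).choose (m+1) : ℕ) : ℚ) else 0

def σf (n m : ℕ) : ℚ := if m = 0 then ((n:ℚ)+1) else 0

def ξf (n m : ℕ) : ℚ :=
  if m % 2 = 0 then ((n.choose (m/2+1) : ℕ) : ℚ) * (((n - m/2).choose (m/2) : ℕ) : ℚ) else 0

def MM : MvPowerSeries (Fin 2) ℚ := mk2 μf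
def H2 : MvPowerSeries (Fin 2) ℚ := mk2 ηf
def G2 : MvPowerSeries (Fin 2) ℚ := mk2 γf
def S2 : MvPowerSeries (Fin 2) ℚ := mk2 σf
def CC : MvPowerSeries (Fin 2) ℚ := mk2 ξf

lemma μf_zero (n : ℕ) : μf n 0 = if n = 0 then 1 else 0 := by simp [μf]

lemma μf_even (n j : ℕ) (hj : 1 ≤ j) :
    μf n (2*j) = (-2) * (catalan (j-1) : ℚ) * (((n-1).choose (2*j-1) : ℕ) : ℚ) := by
  have h1 : 2*j ≠ 0 := by omega
  have h2 : 2*j % 2 = 0 := by omega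
  have h3 : 2*j/2 = j := by omega
  simp only [μf, h1, if_false, h2, if_true, h3, if_pos]

lemma μf_odd (n p : ℕ) (hp : p % 2 = 1) : μf n p = 0 := by
  have h1 : p ≠ 0 := by omega
  have h2 : ¬ (p % 2 = 0) := by omega
  simp only [μf, h1, if_false, h2]

lemma ηf_even (n j : ℕ) :
    ηf n (2*j) = (j.centralBinom : ℚ) * (((n+1).choose (2*j+1) : ℕ) : ℚ) := by
  have h2 : 2*j % 2 = 0 := by omega
  have h3 : 2*j/2 = j := by omega
  simp only [ηf, h2, if_true, h3, if_pos]

lemma ηf_odd (n p : ℕ) (hp : p % 2 = 1) : ηf n p = 0 := by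
  have h2 : ¬ (p % 2 = 0) := by omega
  simp only [ηf, h2, if_false]

lemma γf_even (n j : ℕ) :
    γf n (2*j) = (catalan j : ℚ) * (((n+1).choose (2*j+1) : ℕ) : ℚ) := by
  have h2 : 2*j % 2 = 0 := by omega
  have h3 : 2*j/2 = j := by omega
  simp only [γf, h2, if_true, h3, if_pos]

lemma γf_odd (n p : ℕ) (hp : p % 2 = 1) : γf n p = 0 := by
  have h2 : ¬ (p % 2 = 0) := by omega
  simp only [γf, h2, if_false]

lemma ξf_even (n j : ℕ) :
    ξf n (2*j) = ((n.choose (j+1) : ℕ) : ℚ) * (((n - j).choose j : ℕ) : ℚ) := by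
  have h2 : 2*j % 2 = 0 := by omega
  have h3 : 2*j/2 = j := by omega
  simp only [ξf, h2, if_true, h3, if_pos]

lemma ξf_odd (n p : ℕ) (hp : p % 2 = 1) : ξf n p = 0 := by
  have h2 : ¬ (p % 2 = 0) := by omega
  simp only [ξf, h2, if_false]

lemma s00 : s 0 0 = 0 := by
  ext i; fin_cases i <;> simp

lemma s_eq_zero_iff {n m : ℕ} : s n m = 0 ↔ (n = 0 ∧ m = 0) := by
  rw [← s00, s_inj]

lemma Xab (a b : ℕ) : (MvPowerSeries.X 0 ^ a * MvPowerSeries.X 1 ^ b : MvPowerSeries (Fin 2) ℚ)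
    = MvPowerSeries.monomial (s a b) 1 := by
  rw [MvPowerSeries.X_pow_eq, MvPowerSeries.X_pow_eq, MvPowerSeries.monomial_mul_monomial, one_mul]
  rfl

lemma coeff_shift_mul (a b n m : ℕ) (φ : MvPowerSeries (Fin 2) ℚ) :
    MvPowerSeries.coeff (s n m) ((MvPowerSeries.X 0 ^ a * MvPowerSeries.X 1 ^ b) * φ) =
      if a ≤ n ∧ b ≤ m then MvPowerSeries.coeff (s (n-a) (m-b)) φ else 0 := by
  rw [Xab, MvPowerSeries.coeff_monomial_mul, s_sub]
  by_cases h : a ≤ n ∧ b ≤ m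
  · rw [if_pos (s_le.mpr h), if_pos h, one_mul]
  · rw [if_neg (fun hc => h (s_le.mp hc)), if_neg h]

lemma coeff_one2 (n m : ℕ) :
    MvPowerSeries.coeff (s n m) (1 : MvPowerSeries (Fin 2) ℚ)
      = if n = 0 ∧ m = 0 then 1 else 0 := by
  rw [MvPowerSeries.coeff_one]
  by_cases h : n = 0 ∧ m = 0
  · rw [if_pos (s_eq_zero_iff.mpr h), if_pos h]
  · rw [if_neg (fun hc => h (s_eq_zero_iff.mp hc)), if_neg h]

/-- P3 : MM = 1 - 2 x²y² G2 -/
lemma P3 : MM = 1 - (MvPowerSeries.X 0 ^ 2 * MvPowerSeries.X 1 ^ 2) * (G2 + G2) := by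
  ext d
  obtain ⟨n, m, rfl⟩ : ∃ n m, d = s n m := ⟨d 0, d 1, d_eq d⟩
  rw [map_sub, coeff_one2, coeff_shift_mul, map_add]
  simp only [MM, G2, coeff_mk2, s_apply0, s_apply1]
  rcases Nat.even_or_odd m with ⟨j, hj⟩ | hodd
  · subst hj
    have hm : j + j = 2*j := by omega
    rw [hm]
    rcases Nat.eq_zero_or_pos j with rfl | hj1
    · have : 2*0 = 0 := by omega
      rw [this, μf_zero]
      have h2 : ¬ (2 ≤ (0:ℕ)) := by omega
      rw [if_neg (by omega : ¬ (2 ≤ n ∧ 2 ≤ (0:ℕ)))]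
      by_cases hn : n = 0
      · rw [if_pos hn, if_pos ⟨hn, rfl⟩]; ring
      · rw [if_neg hn, if_neg (fun hc => hn hc.1)]; ring
    · rw [μf_even n j hj1]
      rw [if_neg (by omega : ¬ (n = 0 ∧ 2*j = 0))]
      by_cases hn : 2 ≤ n
      · rw [if_pos ⟨hn, by omega⟩]
        have e : 2*j-2 = 2*(j-1) := by omega
        rw [e, γf_even]
        have e2 : n-2+1 = n-1 := by omega
        have e3 : 2*(j-1)+1 = 2*j-1 := by omega
        rw [e2, e3]
        ring
      · rw [if_neg (fun hc => hn hc.1)]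
        have e4 : n - 1 = 0 := by omega
        rw [e4, Nat.choose_eq_zero_of_lt (by omega : 0 < 2*j-1)]
        push_cast
        ring
  · have hm : m % 2 = 1 := Nat.odd_iff.mp hodd
    rw [μf_odd n m hm]
    rw [if_neg (by omega : ¬ (n = 0 ∧ m = 0))]
    by_cases hn : 2 ≤ n ∧ 2 ≤ m
    · rw [if_pos hn]
      rw [γf_odd _ _ (by omega)]
      ring
    · rw [if_neg hn]; ring

/-- PS : (1-x)² S2 = 1 -/
lemma PS : (1 - MvPowerSeries.X 0)^2 * S2 = 1 := by
  have expand : (1 - MvPowerSeries.X 0 : MvPowerSeries (Fin 2) ℚ)^2 * S2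
      = S2 - (MvPowerSeries.X 0 ^ 1 * MvPowerSeries.X 1 ^ 0) * (S2 + S2)
        + (MvPowerSeries.X 0 ^ 2 * MvPowerSeries.X 1 ^ 0) * S2 := by
    ring
  rw [expand]
  ext d
  obtain ⟨n, m, rfl⟩ : ∃ n m, d = s n m := ⟨d 0, d 1, d_eq d⟩
  rw [map_add, map_sub, coeff_shift_mul, coeff_shift_mul, coeff_one2, map_add]
  simp only [S2, coeff_mk2, s_apply0, s_apply1, σf, Nat.sub_zero]
  by_cases hm : m = 0
  · subst hm
    simp only [if_pos rfl, and_true, Nat.le_refl, le_refl, Nat.zero_le]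
    rcases n with _ | n
    · norm_num
    · rcases n with _ | n
      · norm_num
      · simp only [if_true]
        rw [if_pos (show (1:ℕ) ≤ n+1+1 by omega), if_pos (show (2:ℕ) ≤ n+1+1 by omega),
          if_neg (show ¬(n+1+1 = 0) by omega)]
        show ((((n+1+1:ℕ):ℚ)+1) - (((n+1:ℕ):ℚ)+1 + (((n+1:ℕ):ℚ)+1))) + (((n:ℕ):ℚ)+1) = 0
        push_cast
        ring
  · simp only [if_neg hm, if_neg (show ¬(n = 0 ∧ m = 0) by omega)]
    split_ifs <;> norm_num

lemma catconv (k : ℕ) : (catalan (k+1) : ℚ)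
    = ∑ j ∈ range (k+1), (catalan j : ℚ) * (catalan (k-j) : ℚ) := by
  rw [catalan_succ' k]
  rw [Nat.sum_antidiagonal_eq_sum_range_succ (fun x y => catalan x * catalan y) k]
  push_cast
  rfl

/-- P1 : MM * H2 = S2 -/
lemma P1 : MM * H2 = S2 := by
  ext d
  obtain ⟨n, m, rfl⟩ : ∃ n m, d = s n m := ⟨d 0, d 1, d_eq d⟩
  rw [coeff_mul2]
  simp only [MM, H2, S2, coeff_mk2, s_apply0, s_apply1]
  rcases Nat.even_or_odd m with ⟨k, hk⟩ | hodd
  swap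
  · -- odd case
    have hm : m % 2 = 1 := Nat.odd_iff.mp hodd
    rw [σf, if_neg (by omega)]
    apply Finset.sum_eq_zero; intro i _
    apply Finset.sum_eq_zero; intro p hp
    rw [Finset.mem_range] at hp
    rcases Nat.even_or_odd p with hpe | hpo
    · have : (m-p) % 2 = 1 := by
        have := Nat.even_iff.mp hpe
        omega
      rw [ηf_odd _ _ this, mul_zero]
    · rw [μf_odd _ _ (Nat.odd_iff.mp hpo), zero_mul]
  · have hm : m = 2*k := by omega
    subst hm
    have inner : ∀ i ∈ range (n+1), (∑ p ∈ range (2*k+1), μf i p * ηf (n-i) (2*k-p))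
        = ∑ j ∈ range (k+1), μf i (2*j) * ηf (n-i) (2*(k-j)) := by
      intro i _
      have hodd0 : ∀ p, p % 2 = 1 → (fun p => μf i p * ηf (n-i) (2*k-p)) p = 0 := by
        intro p hp
        show μf i p * ηf (n-i) (2*k-p) = 0
        rw [μf_odd _ _ hp, zero_mul]
      rw [sum_even (fun p => μf i p * ηf (n-i) (2*k-p)) hodd0 k]
      apply Finset.sum_congr rfl
      intro j hj
      rw [Finset.mem_range] at hj
      have e : 2*k-2*j = 2*(k-j) := by omega
      rw [e]
    rw [Finset.sum_congr rfl inner, Finset.sum_comm, Finset.sum_range_succ']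
    have base : ∑ i ∈ range (n+1), μf i (2*0) * ηf (n-i) (2*(k-0)) = ηf n (2*k) := by
      rw [Finset.sum_eq_single 0]
      · rw [Nat.mul_zero, μf_zero, if_pos rfl, one_mul, Nat.sub_zero, Nat.sub_zero]
      · intro i _ hi
        rw [Nat.mul_zero, μf_zero, if_neg hi, zero_mul]
      · intro h
        exact absurd (Finset.mem_range.mpr (by omega)) h
    rw [base]
    have mid : ∀ j ∈ range k, (∑ i ∈ range (n+1), μf i (2*(j+1)) * ηf (n-i) (2*(k-(j+1))))
        = ((-2) * (catalan j : ℚ) * (((k-(j+1)).centralBinom : ℕ) : ℚ))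
            * (((n+1).choose (2*k+1) : ℕ) : ℚ) := by
      intro j hj
      rw [Finset.mem_range] at hj
      have hV : ∑ i ∈ range (n+1),
          ((((i-1).choose (2*j+1) : ℕ)):ℚ) * ((((n-i+1).choose (2*(k-(j+1))+1) : ℕ)):ℚ)
          = (((n+1).choose (2*k+1) : ℕ) : ℚ) := by
        have hv := V2 n (2*j+1) (2*(k-(j+1))+1) (by omega) (by omega)
        have e : 2*j+1 + (2*(k-(j+1))+1) + 1 = 2*k+1 := by omega
        rw [e] at hv
        exact_mod_cast congrArg (Nat.cast : ℕ → ℚ) hv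
      have step : ∀ i ∈ range (n+1), μf i (2*(j+1)) * ηf (n-i) (2*(k-(j+1)))
          = ((-2) * (catalan j : ℚ) * (((k-(j+1)).centralBinom : ℕ) : ℚ))
            * (((((i-1).choose (2*j+1) : ℕ)):ℚ) * ((((n-i+1).choose (2*(k-(j+1))+1) : ℕ)):ℚ)) := by
        intro i _
        rw [μf_even _ _ (by omega), ηf_even]
        have e1 : j+1-1 = j := by omega
        have e2 : 2*(j+1)-1 = 2*j+1 := by omega
        rw [e1, e2]
        ring
      rw [Finset.sum_congr rfl step, ← Finset.mul_sum, hV]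
    rw [Finset.sum_congr rfl mid, ← Finset.sum_mul]
    rcases Nat.eq_zero_or_pos k with rfl | hk1
    · rw [Finset.sum_range_zero, zero_mul, zero_add, ηf_even]
      rw [Nat.centralBinom_zero, Nat.choose_one_right]
      simp only [σf, if_pos rfl]
      push_cast
      ring
    · rw [ηf_even, σf, if_neg (by omega)]
      have hCH := CH (k-1)
      have ek : k-1+1 = k := by omega
      rw [ek] at hCH
      have hsum : ∑ j ∈ range k, (-2) * (catalan j : ℚ) * (((k-(j+1)).centralBinom : ℕ) : ℚ)
          = -(k.centralBinom : ℚ) := by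
        have e2 : ∀ j ∈ range k, (-2) * (catalan j : ℚ) * (((k-(j+1)).centralBinom : ℕ) : ℚ)
            = (-2) * ((catalan j : ℚ) * (((k-1-j).centralBinom : ℕ) : ℚ)) := by
          intro j hj
          rw [Finset.mem_range] at hj
          have e3 : k-(j+1) = k-1-j := by omega
          rw [e3]
          ring
        rw [Finset.sum_congr rfl e2, ← Finset.mul_sum]
        linear_combination hCH
      rw [hsum]
      ring

/-- P2 : MM * G2 = 2 S2 - G2 -/
lemma P2 : MM * G2 = S2 + S2 - G2 := by
  ext d
  obtain ⟨n, m, rfl⟩ : ∃ n m, d = s n m := ⟨d 0, d 1, d_eq d⟩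
  rw [coeff_mul2, map_sub, map_add]
  simp only [MM, G2, S2, coeff_mk2, s_apply0, s_apply1]
  rcases Nat.even_or_odd m with ⟨k, hk⟩ | hodd
  swap
  · have hm : m % 2 = 1 := Nat.odd_iff.mp hodd
    rw [σf, if_neg (by omega), γf_odd _ _ hm]
    have hz : ∑ i ∈ range (n+1), ∑ p ∈ range (m+1), μf i p * γf (n-i) (m-p) = 0 := by
      apply Finset.sum_eq_zero; intro i _
      apply Finset.sum_eq_zero; intro p hp
      rw [Finset.mem_range] at hp
      rcases Nat.even_or_odd p with hpe | hpo
      · have : (m-p) % 2 = 1 := by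
          have := Nat.even_iff.mp hpe
          omega
        rw [γf_odd _ _ this, mul_zero]
      · rw [μf_odd _ _ (Nat.odd_iff.mp hpo), zero_mul]
    rw [hz]
    ring
  · have hm : m = 2*k := by omega
    subst hm
    have inner : ∀ i ∈ range (n+1), (∑ p ∈ range (2*k+1), μf i p * γf (n-i) (2*k-p))
        = ∑ j ∈ range (k+1), μf i (2*j) * γf (n-i) (2*(k-j)) := by
      intro i _
      have hodd0 : ∀ p, p % 2 = 1 → (fun p => μf i p * γf (n-i) (2*k-p)) p = 0 := by
        intro p hp
        show μf i p * γf (n-i) (2*k-p) = 0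
        rw [μf_odd _ _ hp, zero_mul]
      rw [sum_even (fun p => μf i p * γf (n-i) (2*k-p)) hodd0 k]
      apply Finset.sum_congr rfl
      intro j hj
      rw [Finset.mem_range] at hj
      have e : 2*k-2*j = 2*(k-j) := by omega
      rw [e]
    rw [Finset.sum_congr rfl inner, Finset.sum_comm, Finset.sum_range_succ']
    have base : ∑ i ∈ range (n+1), μf i (2*0) * γf (n-i) (2*(k-0)) = γf n (2*k) := by
      rw [Finset.sum_eq_single 0]
      · rw [Nat.mul_zero, μf_zero, if_pos rfl, one_mul, Nat.sub_zero, Nat.sub_zero]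
      · intro i _ hi
        rw [Nat.mul_zero, μf_zero, if_neg hi, zero_mul]
      · intro h
        exact absurd (Finset.mem_range.mpr (by omega)) h
    rw [base]
    have mid : ∀ j ∈ range k, (∑ i ∈ range (n+1), μf i (2*(j+1)) * γf (n-i) (2*(k-(j+1))))
        = ((-2) * (catalan j : ℚ) * ((catalan (k-(j+1)) : ℕ) : ℚ))
            * (((n+1).choose (2*k+1) : ℕ) : ℚ) := by
      intro j hj
      rw [Finset.mem_range] at hj
      have hV : ∑ i ∈ range (n+1),
          ((((i-1).choose (2*j+1) : ℕ)):ℚ) * ((((n-i+1).choose (2*(k-(j+1))+1) : ℕ)):ℚ)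
          = (((n+1).choose (2*k+1) : ℕ) : ℚ) := by
        have hv := V2 n (2*j+1) (2*(k-(j+1))+1) (by omega) (by omega)
        have e : 2*j+1 + (2*(k-(j+1))+1) + 1 = 2*k+1 := by omega
        rw [e] at hv
        exact_mod_cast congrArg (Nat.cast : ℕ → ℚ) hv
      have step : ∀ i ∈ range (n+1), μf i (2*(j+1)) * γf (n-i) (2*(k-(j+1)))
          = ((-2) * (catalan j : ℚ) * ((catalan (k-(j+1)) : ℕ) : ℚ))
            * (((((i-1).choose (2*j+1) : ℕ)):ℚ) * ((((n-i+1).choose (2*(k-(j+1))+1) : ℕ)):ℚ)) := by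
        intro i _
        rw [μf_even _ _ (by omega), γf_even]
        have e1 : j+1-1 = j := by omega
        have e2 : 2*(j+1)-1 = 2*j+1 := by omega
        rw [e1, e2]
        ring
      rw [Finset.sum_congr rfl step, ← Finset.mul_sum, hV]
    rw [Finset.sum_congr rfl mid, ← Finset.sum_mul]
    rcases Nat.eq_zero_or_pos k with rfl | hk1
    · rw [Finset.sum_range_zero, zero_mul, zero_add, γf_even]
      rw [catalan_zero, Nat.choose_one_right]
      simp only [σf, if_pos rfl]
      push_cast
      ring
    · rw [γf_even, σf, if_neg (by omega)]
      have hcat := catconv (k-1)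
      have ek : k-1+1 = k := by omega
      rw [ek] at hcat
      have hsum : ∑ j ∈ range k, (-2) * (catalan j : ℚ) * ((catalan (k-(j+1)) : ℕ) : ℚ)
          = (-2) * (catalan k : ℚ) := by
        have e2 : ∀ j ∈ range k, (-2) * (catalan j : ℚ) * ((catalan (k-(j+1)) : ℕ) : ℚ)
            = (-2) * ((catalan j : ℚ) * ((catalan (k-1-j) : ℕ) : ℚ)) := by
          intro j hj
          rw [Finset.mem_range] at hj
          have e3 : k-(j+1) = k-1-j := by omega
          rw [e3]
          ring
        rw [Finset.sum_congr rfl e2, ← Finset.mul_sum]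
        linear_combination (2 : ℚ) * hcat
      rw [hsum]
      ring

/-- P0 : MM * MM = 1 - 4 x² y² S2 -/
lemma P0 : MM * MM = 1 - (MvPowerSeries.X 0 ^ 2 * MvPowerSeries.X 1 ^ 2) * (S2+S2+S2+S2) := by
  ext d
  obtain ⟨n, m, rfl⟩ : ∃ n m, d = s n m := ⟨d 0, d 1, d_eq d⟩
  rw [coeff_mul2, map_sub, coeff_one2, coeff_shift_mul, map_add, map_add, map_add]
  simp only [MM, S2, coeff_mk2, s_apply0, s_apply1]
  rcases Nat.even_or_odd m with ⟨k, hk⟩ | hodd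
  swap
  · have hm : m % 2 = 1 := Nat.odd_iff.mp hodd
    have hz : ∑ i ∈ range (n+1), ∑ p ∈ range (m+1), μf i p * μf (n-i) (m-p) = 0 := by
      apply Finset.sum_eq_zero; intro i _
      apply Finset.sum_eq_zero; intro p hp
      rw [Finset.mem_range] at hp
      rcases Nat.even_or_odd p with hpe | hpo
      · have : (m-p) % 2 = 1 := by
          have := Nat.even_iff.mp hpe
          omega
        rw [μf_odd _ _ this, mul_zero]
      · rw [μf_odd _ _ (Nat.odd_iff.mp hpo), zero_mul]
    rw [hz, if_neg (by omega : ¬ (n = 0 ∧ m = 0))]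
    by_cases h2 : 2 ≤ n ∧ 2 ≤ m
    · rw [if_pos h2]
      rw [σf, if_neg (by omega)]
      ring
    · rw [if_neg h2]
      ring
  · have hm : m = 2*k := by omega
    subst hm
    have inner : ∀ i ∈ range (n+1), (∑ p ∈ range (2*k+1), μf i p * μf (n-i) (2*k-p))
        = ∑ j ∈ range (k+1), μf i (2*j) * μf (n-i) (2*(k-j)) := by
      intro i _
      have hodd0 : ∀ p, p % 2 = 1 → (fun p => μf i p * μf (n-i) (2*k-p)) p = 0 := by
        intro p hp
        show μf i p * μf (n-i) (2*k-p) = 0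
        rw [μf_odd _ _ hp, zero_mul]
      rw [sum_even (fun p => μf i p * μf (n-i) (2*k-p)) hodd0 k]
      apply Finset.sum_congr rfl
      intro j hj
      rw [Finset.mem_range] at hj
      have e : 2*k-2*j = 2*(k-j) := by omega
      rw [e]
    rw [Finset.sum_congr rfl inner, Finset.sum_comm, Finset.sum_range_succ']
    have base : ∑ i ∈ range (n+1), μf i (2*0) * μf (n-i) (2*(k-0)) = μf n (2*k) := by
      rw [Finset.sum_eq_single 0]
      · rw [Nat.mul_zero, μf_zero, if_pos rfl, one_mul, Nat.sub_zero, Nat.sub_zero]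
      · intro i _ hi
        rw [Nat.mul_zero, μf_zero, if_neg hi, zero_mul]
      · intro h
        exact absurd (Finset.mem_range.mpr (by omega)) h
    rw [base]
    rcases k with _ | k'
    · -- k = 0
      rw [Finset.sum_range_zero, zero_add, μf_zero]
      rw [if_neg (by omega : ¬ (2 ≤ n ∧ 2 ≤ 2*0))]
      by_cases hn : n = 0
      · rw [if_pos hn, if_pos (by omega : n = 0 ∧ 2*0 = 0)]; ring
      · rw [if_neg hn, if_neg (by simp [hn] : ¬ (n = 0 ∧ 2*0 = 0))]; ring
    · -- k = k'+1
      rw [Finset.sum_range_succ]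
      have top : ∑ i ∈ range (n+1), μf i (2*(k'+1)) * μf (n-i) (2*((k'+1)-(k'+1)))
          = μf n (2*(k'+1)) := by
        have e0 : (k'+1)-(k'+1) = 0 := by omega
        rw [e0]
        rw [Finset.sum_eq_single n]
        · rw [Nat.sub_self, Nat.mul_zero, μf_zero, if_pos rfl, mul_one]
        · intro i hi hne
          rw [Finset.mem_range] at hi
          rw [Nat.mul_zero, μf_zero, if_neg (by omega), mul_zero]
        · intro h
          exact absurd (Finset.mem_range.mpr (by omega)) h
      rw [top]
      have mid : ∀ j ∈ range k', (∑ i ∈ range (n+1), μf i (2*(j+1)) * μf (n-i) (2*((k'+1)-(j+1))))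
          = (4 * (catalan j : ℚ) * ((catalan (k'-1-j) : ℕ) : ℚ))
              * (((n-1).choose (2*k'+1) : ℕ) : ℚ) := by
        intro j hj
        rw [Finset.mem_range] at hj
        have hV : ∑ i ∈ range (n+1),
            ((((i-1).choose (2*j+1) : ℕ)):ℚ) * ((((n-i-1).choose (2*(k'-j)-1) : ℕ)):ℚ)
            = (((n-1).choose (2*k'+1) : ℕ) : ℚ) := by
          have hv := V1 n (2*j+1) (2*(k'-j)-1) (by omega) (by omega)
          have e : 2*j+1 + (2*(k'-j)-1) + 1 = 2*k'+1 := by omega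
          rw [e] at hv
          exact_mod_cast congrArg (Nat.cast : ℕ → ℚ) hv
        have step : ∀ i ∈ range (n+1), μf i (2*(j+1)) * μf (n-i) (2*((k'+1)-(j+1)))
            = (4 * (catalan j : ℚ) * ((catalan (k'-1-j) : ℕ) : ℚ))
              * (((((i-1).choose (2*j+1) : ℕ)):ℚ) * ((((n-i-1).choose (2*(k'-j)-1) : ℕ)):ℚ)) := by
          intro i _
          have ekj : (k'+1)-(j+1) = k'-j := by omega
          rw [ekj]
          rw [μf_even _ _ (by omega), μf_even _ _ (by omega)]
          have e1 : j+1-1 = j := by omega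
          have e2 : 2*(j+1)-1 = 2*j+1 := by omega
          have e3 : k'-j-1 = k'-1-j := by omega
          rw [e1, e2, e3]
          ring
        rw [Finset.sum_congr rfl step, ← Finset.mul_sum, hV]
      rw [Finset.sum_congr rfl mid, ← Finset.sum_mul]
      rw [if_neg (by omega : ¬ (n = 0 ∧ 2*(k'+1) = 0))]
      rcases Nat.eq_zero_or_pos k' with rfl | hk1
      · -- k' = 0 : the k=1 case
        rw [Finset.sum_range_zero, zero_mul, zero_add]
        rw [μf_even _ _ (by omega : 1 ≤ 0+1)]
        have e1 : 0+1-1 = 0 := by omega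
        have e2 : 2*(0+1)-1 = 1 := by omega
        rw [e1, e2, catalan_zero, Nat.choose_one_right]
        by_cases hn : 2 ≤ n
        · rw [if_pos ⟨hn, by omega⟩]
          simp only [σf, if_pos rfl]
          have c1 : ((n-1:ℕ):ℚ) = (n:ℚ)-1 := by rw [Nat.cast_sub (by omega)]; norm_num
          have c2 : ((n-2:ℕ):ℚ) = (n:ℚ)-2 := by rw [Nat.cast_sub (by omega)]; norm_num
          rw [c1, c2]
          push_cast
          ring
        · rw [if_neg (fun hc => hn hc.1)]
          have e4 : n-1 = 0 := by omega
          rw [e4]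
          push_cast
          ring
      · -- k' ≥ 1
        have hcat := catconv (k'-1)
        have ek : k'-1+1 = k' := by omega
        rw [ek] at hcat
        have hsum : ∑ j ∈ range k', 4 * (catalan j : ℚ) * ((catalan (k'-1-j) : ℕ) : ℚ)
            = 4 * (catalan k' : ℚ) := by
          have e2 : ∀ j ∈ range k', 4 * (catalan j : ℚ) * ((catalan (k'-1-j) : ℕ) : ℚ)
              = 4 * ((catalan j : ℚ) * ((catalan (k'-1-j) : ℕ) : ℚ)) := by
            intro j _
            ring
          rw [Finset.sum_congr rfl e2, ← Finset.mul_sum]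
          linear_combination (-4 : ℚ) * hcat
        rw [hsum]
        rw [μf_even _ _ (by omega : 1 ≤ k'+1)]
        have e1 : k'+1-1 = k' := by omega
        have e2 : 2*(k'+1)-1 = 2*k'+1 := by omega
        rw [e1, e2]
        have eσ : ¬ (2*(k'+1)-2 = 0) := by omega
        by_cases hn : 2 ≤ n ∧ 2 ≤ 2*(k'+1)
        · rw [if_pos hn]
          simp only [σf, if_neg eσ]
          ring
        · rw [if_neg hn]
          ring

lemma hcb (k : ℕ) : (((2*k).choose k : ℕ) : ℚ) = (k.centralBinom : ℚ) := by
  rw [Nat.centralBinom]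

lemma cb_sub_cat (k : ℕ) : (((2*k).choose (k+1) : ℕ) : ℚ)
    = (k.centralBinom : ℚ) - (catalan k : ℚ) := by
  have h4 : (((2*k).choose (k+1) : ℕ) : ℚ) * ((k:ℚ)+1) = (((2*k).choose k : ℕ) : ℚ) * (k:ℚ) := by
    have := Nat.choose_succ_right_eq (2*k) k
    have hc : (((2*k).choose (k+1) * (k+1) : ℕ) : ℚ) = (((2*k).choose k * (2*k-k) : ℕ) : ℚ) := by
      exact_mod_cast congrArg (Nat.cast : ℕ → ℚ) this
    have e : 2*k-k = k := by omega
    rw [e] at hc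
    push_cast at hc
    linarith
  have hc2 := cast_catalan_c k
  have hne : ((k:ℚ)+1) ≠ 0 := by positivity
  apply mul_right_cancel₀ hne
  rw [hcb k] at h4
  linear_combination h4 + hc2

/-- PC : CC = (x+1) H2 - G2 -/
lemma PC : CC = (MvPowerSeries.X 0 + 1) * H2 - G2 := by
  have expand : (MvPowerSeries.X 0 + 1) * H2 - G2
      = ((MvPowerSeries.X 0 ^ 1 * MvPowerSeries.X 1 ^ 0) * H2 + H2) - G2 := by
    ring
  rw [expand]
  ext d
  obtain ⟨n, m, rfl⟩ : ∃ n m, d = s n m := ⟨d 0, d 1, d_eq d⟩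
  rw [map_sub, map_add, coeff_shift_mul]
  simp only [CC, H2, G2, coeff_mk2, s_apply0, s_apply1, Nat.sub_zero]
  rcases Nat.even_or_odd m with ⟨k, hk⟩ | hodd
  swap
  · have hm : m % 2 = 1 := Nat.odd_iff.mp hodd
    rw [ξf_odd _ _ hm, ηf_odd n m hm, γf_odd _ _ hm, ηf_odd (n-1) m hm]
    split_ifs with h
    · ring
    · ring
  · have hm : m = 2*k := by omega
    subst hm
    rw [ξf_even, ηf_even, γf_even]
    by_cases hn : 1 ≤ n
    · rw [if_pos ⟨hn, by omega⟩, ηf_even]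
      have e : n-1+1 = n := by omega
      rw [e]
      linear_combination (II n k) + ((n.choose (2*k+1) : ℚ))*(hcb k)
        + (((n+1).choose (2*k+1) : ℚ))*(cb_sub_cat k)
    · have hn0 : n = 0 := by omega
      subst hn0
      rw [if_neg (by omega : ¬ (1 ≤ 0 ∧ 0 ≤ 2*k)), ηf_even]
      have hz : ((Nat.choose 0 (2*k+1) : ℕ) : ℚ) = 0 := by
        rw [Nat.choose_eq_zero_of_lt (by omega)]
        norm_num
      linear_combination (II 0 k) + ((Nat.choose 0 (2*k+1) : ℚ))*(hcb k)
        + (((Nat.choose 1 (2*k+1) : ℕ)) : ℚ)*(cb_sub_cat k) + (k.centralBinom : ℚ)*hz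

lemma hM0 : MvPowerSeries.constantCoeff MM = 1 := by
  have : MvPowerSeries.constantCoeff MM = MvPowerSeries.coeff (s 0 0) MM := by
    rw [s00]
    rfl
  rw [this]
  simp only [MM, coeff_mk2, s_apply0, s_apply1, μf]
  norm_num

lemma ne_zero_of_cc (φ : MvPowerSeries (Fin 2) ℚ)
    (h : MvPowerSeries.constantCoeff φ ≠ 0) : φ ≠ 0 := by
  intro hz
  rw [hz, map_zero] at h
  exact h rfl

end

end Stmt18

open Stmt18 MvPowerSeries in
/-- In `ℚ[[x,y]]`, let `L(x,y) = (1 − (2xy/(1−x))²)^{1/2}` (the branch with constant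
term `1`, characterized by `L²(1−x)² = (1−x)² − (2xy)²`). Then
`(1−x)^{−2}((x+1)/L − (1/2)((1−x)/(xy))²(1−L)) = ∑_{n,k} C(n,k+1)C(n−k,k) xⁿ y^{2k}`;
the equation defining the left-hand side `B` is stated with denominators cleared as
`2x²y²(1−x)²L·B = 2x²y²(x+1) − (1−x)²(1−L)L`, which determines `B` uniquely. -/
theorem stmt_18 (L B : MvPowerSeries (Fin 2) ℚ)
    (hL : L ^ 2 * (1 - MvPowerSeries.X (0 : Fin 2)) ^ 2 =
      (1 - MvPowerSeries.X (0 : Fin 2)) ^ 2 -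
        (2 * MvPowerSeries.X 0 * MvPowerSeries.X 1) ^ 2)
    (hL0 : MvPowerSeries.constantCoeff L = 1)
    (hB : 2 * MvPowerSeries.X (0 : Fin 2) ^ 2 * MvPowerSeries.X 1 ^ 2 *
        (1 - MvPowerSeries.X 0) ^ 2 * L * B =
      2 * MvPowerSeries.X 0 ^ 2 * MvPowerSeries.X 1 ^ 2 * (MvPowerSeries.X 0 + 1) -
        (1 - MvPowerSeries.X 0) ^ 2 * (1 - L) * L) :
    ∀ n k : ℕ,
      MvPowerSeries.coeff (Finsupp.single 0 n + Finsupp.single 1 (2 * k)) B =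
        (n.choose (k + 1) : ℚ) * ((n - k).choose k : ℚ) ∧
      MvPowerSeries.coeff (Finsupp.single 0 n + Finsupp.single 1 (2 * k + 1)) B = 0 := by
  have hA : MM^2 * (1 - X 0)^2 = (1 - X 0)^2 - (2 * X 0 * X 1)^2 := by
    linear_combination ((1 - X (0:Fin 2))^2) * P0 - (4 * X (0:Fin 2)^2 * X 1^2) * PS
  have hL2 : (L - MM) * ((L + MM) * (1 - X 0)^2) = 0 := by
    linear_combination hL - hA
  have hunit : IsUnit ((L + MM) * (1 - X (0:Fin 2))^2) := by
    rw [MvPowerSeries.isUnit_iff_constantCoeff, map_mul, map_pow, map_sub, map_one, map_add,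
      hL0, hM0, MvPowerSeries.constantCoeff_X]
    norm_num
  have hLM : L = MM := by
    rcases mul_eq_zero.mp hL2 with h | h
    · exact sub_eq_zero.mp h
    · exact absurd h hunit.ne_zero
  have hx_ne : (1 - X (0:Fin 2) : MvPowerSeries (Fin 2) ℚ) ≠ 0 := by
    apply ne_zero_of_cc
    rw [map_sub, map_one, MvPowerSeries.constantCoeff_X]
    norm_num
  have hBkey : (1 - X 0) * ((1 - X 0) * (MM * (1 + 2*(X 0^2 * X 1^2)*B))
      - (1 - X 0 - 2*(X 0^2 * X 1^2))) = 0 := by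
    rw [← hLM]
    linear_combination hB + hL
  have hstep : (1 - X 0) * (MM * (1 + 2*(X 0^2 * X 1^2)*B))
      = (1 - X 0 - 2*(X 0^2 * X 1^2)) := by
    rcases mul_eq_zero.mp hBkey with h | h
    · exact absurd h hx_ne
    · exact sub_eq_zero.mp h
  have hCkey : (1 - X 0) * (MM * (1 + 2*(X 0^2 * X 1^2)*CC))
      = (1 - X 0 - 2*(X 0^2 * X 1^2)) := by
    rw [PC]
    linear_combination (2*(X (0:Fin 2)^2 * X 1^2)*(1 - X 0)*(X 0 + 1)) * P1
      - (2*(X (0:Fin 2)^2 * X 1^2)*(1 - X 0)) * P2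
      + (1 - X (0:Fin 2)) * P3
      - (2*(X (0:Fin 2)^2 * X 1^2)) * PS
  have hMM_ne : ((1 - X 0) * MM : MvPowerSeries (Fin 2) ℚ) ≠ 0 := by
    apply ne_zero_of_cc
    rw [map_mul, map_sub, map_one, MvPowerSeries.constantCoeff_X, hM0]
    norm_num
  have key : ((1 - X 0) * MM) * (1 + 2*(X 0^2 * X 1^2)*B)
      = ((1 - X 0) * MM) * (1 + 2*(X 0^2 * X 1^2)*CC) := by
    linear_combination hstep - hCkey
  have h1 := mul_left_cancel₀ hMM_ne key
  have h2 : ((2 : MvPowerSeries (Fin 2) ℚ) * (X 0^2 * X 1^2)) * B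
      = ((2 : MvPowerSeries (Fin 2) ℚ) * (X 0^2 * X 1^2)) * CC := by
    linear_combination h1
  have h2_ne : ((2 : MvPowerSeries (Fin 2) ℚ) * (X 0^2 * X 1^2)) ≠ 0 := by
    intro h
    have := congrArg (MvPowerSeries.coeff (s 2 2)) h
    rw [map_zero] at this
    rw [show ((2 : MvPowerSeries (Fin 2) ℚ) * (X 0^2 * X 1^2))
      = ((1:MvPowerSeries (Fin 2) ℚ) + 1) * (X 0^2 * X 1^2) from by ring] at this
    rw [Xab, add_mul, one_mul, map_add, MvPowerSeries.coeff_monomial_same] at this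
    norm_num at this
  have hBC : B = CC := mul_left_cancel₀ h2_ne h2
  intro n k
  constructor
  · rw [hBC]
    show MvPowerSeries.coeff (s n (2*k)) CC = _
    rw [show CC = mk2 ξf from rfl, coeff_mk2, s_apply0, s_apply1, ξf_even]
  · rw [hBC]
    show MvPowerSeries.coeff (s n (2*k+1)) CC = _
    rw [show CC = mk2 ξf from rfl, coeff_mk2, s_apply0, s_apply1,
      ξf_odd _ _ (by omega : (2*k+1) % 2 = 1)]
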